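/- Let γ : [0, L] → ℝ^d be a twice continuously differentiable curve parametrized by arc length whose curvature is bounded in norm by M > 0. Then for every 0 < ε < π/M and every t ∈ [0, L − ε], we have ε ≥ ‖γ(t+ε) − γ(t)‖₂ ≥ (2/M)·sin(Mε/2). -/

import Mathlib

open Real Set intervalIntegral
open scoped RealInnerProductSpace

lemma chord_key {E : Type*} [NormedAddCommGroup E] [InnerProductSpace ℝ E]
    {g g' : ℝ → E} {J : Set ℝ} (hJconv : Convex ℝ J) {M : ℝ} (hM : 0 < M)
    (hg : ∀ s ∈ J, HasDerivWithinAt g (g' s) J s)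
    (hu : ∀ s ∈ J, ‖g s‖ = 1)
    (hb : ∀ s ∈ J, ‖g' s‖ ≤ M)
    (horth : ∀ s ∈ J, ⟪g' s, g s⟫ = 0)
    {m : ℝ} (hm : m ∈ J) {s : ℝ} (hs : s ∈ J)
    (hsm : M * |s - m| ≤ π / 2) :
    Real.cos (M * |s - m|) ≤ ⟪g s, g m⟫ := by
  set h : ℝ → ℝ := fun u => ⟪g u, g m⟫ with hdef
  have hh : ∀ u ∈ J, HasDerivWithinAt h (⟪g' u, g m⟫) J u := by
    intro u hu'
    have := HasDerivWithinAt.inner ℝ (hg u hu') (hasDerivWithinAt_const u J (g m))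
    simpa using this
  have habs : ∀ u ∈ J, |h u| ≤ 1 := by
    intro u hu'
    have := abs_real_inner_le_norm (g u) (g m)
    rwa [hu u hu', hu m hm, one_mul] at this
  have hm1 : h m = 1 := by
    simp only [hdef, real_inner_self_eq_norm_sq, hu m hm]; norm_num
  have hd' : ∀ u ∈ J, |⟪g' u, g m⟫| ≤ M * Real.sqrt (1 - h u ^ 2) := by
    intro u hu'
    have he : ⟪g' u, g m⟫ = ⟪g' u, g m - h u • g u⟫ := by
      rw [inner_sub_right, real_inner_smul_right, horth u hu']; ring
    have hw2 : ‖g m - h u • g u‖ ^ 2 = 1 - h u ^ 2 := by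
      rw [norm_sub_sq_real, real_inner_smul_right, norm_smul, hu u hu', hu m hm,
        real_inner_comm]
      simp only [Real.norm_eq_abs, mul_one, one_pow, sq_abs]
      ring
    have hw : ‖g m - h u • g u‖ = Real.sqrt (1 - h u ^ 2) := by
      rw [← hw2, Real.sqrt_sq (norm_nonneg _)]
    calc |⟪g' u, g m⟫| = |⟪g' u, g m - h u • g u⟫| := by rw [he]
      _ ≤ ‖g' u‖ * ‖g m - h u • g u‖ := abs_real_inner_le_norm _ _
      _ ≤ M * Real.sqrt (1 - h u ^ 2) := by
          rw [hw]; exact mul_le_mul_of_nonneg_right (hb u hu') (Real.sqrt_nonneg _)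
  -- for each k ∈ (0,1), k * h s ≥ cos (arccos k + M|s-m|)
  have hkstep : ∀ k ∈ Ioo (0:ℝ) 1, Real.cos (Real.arccos k + M * |s - m|) / k ≤ h s := by
    intro k hk
    set ψ : ℝ → ℝ := fun u => Real.arccos (k * h u) with hψdef
    have hkh : ∀ u ∈ J, |k * h u| < 1 := by
      intro u hu'
      rw [abs_mul, abs_of_pos hk.1]
      calc k * |h u| ≤ k * 1 := mul_le_mul_of_nonneg_left (habs u hu') hk.1.le
        _ < 1 := by linarith [hk.2]
    have hψd : ∀ u ∈ J, HasDerivWithinAt ψ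
        (-(1 / Real.sqrt (1 - (k * h u) ^ 2)) * (k * ⟪g' u, g m⟫)) J u := by
      intro u hu'
      have h1 : k * h u ≠ -1 := by
        intro hc; have := hkh u hu'; rw [hc] at this; simp at this
      have h2 : k * h u ≠ 1 := by
        intro hc; have := hkh u hu'; rw [hc] at this; simp at this
      have hc := (Real.hasDerivAt_arccos h1 h2).comp_hasDerivWithinAt u
        ((hh u hu').const_mul k)
      exact hc
    have hψb : ∀ u ∈ J, ‖-(1 / Real.sqrt (1 - (k * h u) ^ 2)) * (k * ⟪g' u, g m⟫)‖ ≤ M := by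
      intro u hu'
      have hlt : (k * h u) ^ 2 < 1 := by
        have := hkh u hu'; nlinarith [abs_nonneg (k * h u), sq_abs (k * h u)]
      have hpos : 0 < Real.sqrt (1 - (k * h u) ^ 2) := Real.sqrt_pos.2 (by linarith)
      have hkey : k * Real.sqrt (1 - h u ^ 2) ≤ Real.sqrt (1 - (k * h u) ^ 2) := by
        have e1 : k * Real.sqrt (1 - h u ^ 2) = Real.sqrt (k ^ 2 * (1 - h u ^ 2)) := by
          rw [Real.sqrt_mul (sq_nonneg k), Real.sqrt_sq hk.1.le]
        rw [e1]
        apply Real.sqrt_le_sqrt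
        nlinarith [hk.1.le, hk.2.le, sq_nonneg (h u), mul_pos hk.1 hk.1]
      have hb' := hd' u hu'
      rw [Real.norm_eq_abs, abs_mul, abs_neg, abs_div, abs_one, abs_of_pos hpos,
        abs_mul, abs_of_pos hk.1]
      rw [div_mul_eq_mul_div, one_mul, div_le_iff₀ hpos]
      calc k * |⟪g' u, g m⟫| ≤ k * (M * Real.sqrt (1 - h u ^ 2)) :=
            mul_le_mul_of_nonneg_left hb' hk.1.le
        _ = M * (k * Real.sqrt (1 - h u ^ 2)) := by ring
        _ ≤ M * Real.sqrt (1 - (k * h u) ^ 2) :=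
            mul_le_mul_of_nonneg_left hkey hM.le
    have hmvt := Convex.norm_image_sub_le_of_norm_hasDerivWithin_le hψd hψb hJconv hm hs
    rw [Real.norm_eq_abs, Real.norm_eq_abs] at hmvt
    have hψm : ψ m = Real.arccos k := by rw [hψdef]; simp [hm1]
    have hψs_le : ψ s ≤ Real.arccos k + M * |s - m| := by
      have := abs_le.1 hmvt
      have h2 : ψ s - ψ m ≤ M * |s - m| := by
        calc ψ s - ψ m ≤ |ψ s - ψ m| := le_abs_self _
          _ ≤ M * |s - m| := hmvt
      linarith [hψm ▸ h2]
    have hA_le_pi : Real.arccos k + M * |s - m| ≤ π := by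
      have := Real.arccos_le_pi_div_two.2 hk.1.le
      linarith
    have hcosψ : Real.cos (ψ s) = k * h s := by
      apply Real.cos_arccos
      · linarith [abs_le.1 (hkh s hs).le]
      · linarith [abs_le.1 (hkh s hs).le]
    have hmono : Real.cos (Real.arccos k + M * |s - m|) ≤ Real.cos (ψ s) :=
      Real.cos_le_cos_of_nonneg_of_le_pi (Real.arccos_nonneg _) hA_le_pi hψs_le
    rw [hcosψ] at hmono
    rw [div_le_iff₀ hk.1]
    linarith [hmono]
  -- take the limit k → 1⁻
  have hlim : Filter.Tendsto (fun k : ℝ => Real.cos (Real.arccos k + M * |s - m|) / k)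
      (nhdsWithin 1 (Iio 1)) (nhds (Real.cos (M * |s - m|))) := by
    have hca : ContinuousAt (fun k : ℝ => Real.cos (Real.arccos k + M * |s - m|) / k) 1 := by
      apply ContinuousAt.div
      · exact Real.continuous_cos.continuousAt.comp
          ((Real.continuous_arccos.continuousAt).add continuousAt_const)
      · exact continuousAt_id
      · exact one_ne_zero
    have h2 := hca.tendsto.mono_left (nhdsWithin_le_nhds (s := Iio (1:ℝ)))
    simpa [Real.arccos_one] using h2
  refine le_of_tendsto hlim ?_
  filter_upwards [Ioo_mem_nhdsLT_of_mem (by constructor <;> norm_num : (1:ℝ) ∈ Ioc (0:ℝ) 1)]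
    with k hk
  exact hkstep k hk

/-- Chord-length bound for a unit-speed `C²` curve with curvature bounded by `M`:
for `0 < ε < π/M` and `t ∈ [0, L-ε]`,
`ε ≥ ‖γ(t+ε) − γ(t)‖ ≥ (2/M)·sin(Mε/2)`. -/
theorem chord_length_bound {d : ℕ} (L M : ℝ) (hM : 0 < M)
    (γ : ℝ → EuclideanSpace ℝ (Fin d))
    (hC2 : ContDiffOn ℝ 2 γ (Set.Icc 0 L))
    (hunit : ∀ s ∈ Set.Icc (0 : ℝ) L, ‖deriv γ s‖ = 1)
    (hcurv : ∀ s ∈ Set.Icc (0 : ℝ) L, ‖deriv (deriv γ) s‖ ≤ M)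
    (ε : ℝ) (hε : 0 < ε) (hεM : ε < Real.pi / M)
    (t : ℝ) (ht : t ∈ Set.Icc (0 : ℝ) (L - ε)) :
    ε ≥ ‖γ (t + ε) - γ t‖ ∧ ‖γ (t + ε) - γ t‖ ≥ (2 / M) * Real.sin (M / 2 * ε) := by
  obtain ⟨ht0, htL⟩ := ht
  have hεL : ε ≤ L := by linarith
  have hL : (0:ℝ) < L := lt_of_lt_of_le hε hεL
  set I : Set ℝ := Set.Icc (0:ℝ) L with hIdef
  have hUI : UniqueDiffOn ℝ I := uniqueDiffOn_Icc hL
  have hdiffγ : ∀ s ∈ I, DifferentiableAt ℝ γ s := by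
    intro s hs
    by_contra hnd
    have h0 := deriv_zero_of_not_differentiableAt hnd
    have h1 := hunit s hs
    rw [h0] at h1; simp at h1
  set g : ℝ → EuclideanSpace ℝ (Fin d) := derivWithin γ I with hgdef
  have hgeq : ∀ s ∈ I, g s = deriv γ s := fun s hs =>
    (hdiffγ s hs).derivWithin (hUI s hs)
  have hC1 : ContDiffOn ℝ 1 g I := hC2.derivWithin hUI (by norm_num)
  set g' : ℝ → EuclideanSpace ℝ (Fin d) := derivWithin g I with hg'def
  have hgd : ∀ s ∈ I, HasDerivWithinAt g (g' s) I s := fun s hs =>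
    ((hC1.differentiableOn one_ne_zero) s hs).hasDerivWithinAt
  have hγd : ∀ s ∈ I, HasDerivWithinAt γ (g s) I s := fun s hs => by
    rw [hgeq s hs]; exact ((hdiffγ s hs).hasDerivAt).hasDerivWithinAt
  have hgu : ∀ s ∈ I, ‖g s‖ = 1 := fun s hs => by rw [hgeq s hs]; exact hunit s hs
  have hg'cont : ContinuousOn g' I := hC1.continuousOn_derivWithin hUI le_rfl
  have hg'int : ∀ s ∈ Set.Ioo (0:ℝ) L, ‖g' s‖ ≤ M := by
    intro s hs
    have hsI : s ∈ I := Set.Ioo_subset_Icc_self hs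
    have hnb : I ∈ nhds s := Icc_mem_nhds hs.1 hs.2
    have h1 : g' s = deriv g s := derivWithin_of_mem_nhds hnb
    have h2 : deriv g s = deriv (deriv γ) s :=
      Filter.EventuallyEq.deriv_eq (by filter_upwards [hnb] with u hu; exact hgeq u hu)
    rw [h1, h2]; exact hcurv s hsI
  have hg'bd : ∀ s ∈ I, ‖g' s‖ ≤ M := by
    intro s hs
    have hcl : s ∈ closure (Set.Ioo (0:ℝ) L) := by
      rw [closure_Ioo hL.ne]; exact hs
    have hne : (nhdsWithin s (Set.Ioo (0:ℝ) L)).NeBot :=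
      mem_closure_iff_nhdsWithin_neBot.1 hcl
    have htend : Filter.Tendsto (fun u => ‖g' u‖) (nhdsWithin s (Set.Ioo (0:ℝ) L))
        (nhds ‖g' s‖) := ((hg'cont s hs).mono Set.Ioo_subset_Icc_self).norm
    exact le_of_tendsto htend
      (Filter.eventually_of_mem self_mem_nhdsWithin (fun u hu => hg'int u hu))
  -- restrict to J = [t, t+ε]
  set J : Set ℝ := Set.Icc t (t + ε) with hJdef
  have hJI : J ⊆ I := Set.Icc_subset_Icc ht0 (by linarith)
  have htt : t ≤ t + ε := by linarith
  have hgJ : ∀ s ∈ J, HasDerivWithinAt g (g' s) J s := fun s hs =>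
    (hgd s (hJI hs)).mono hJI
  have horth : ∀ s ∈ J, ⟪g' s, g s⟫ = 0 := by
    intro s hs
    have hsI : s ∈ I := hJI hs
    have h1 : HasDerivWithinAt (fun u => (⟪g u, g u⟫ : ℝ))
        (⟪g s, g' s⟫ + ⟪g' s, g s⟫) I s :=
      HasDerivWithinAt.inner ℝ (hgd s hsI) (hgd s hsI)
    have h2 : HasDerivWithinAt (fun u => (⟪g u, g u⟫ : ℝ)) 0 I s := by
      apply (hasDerivWithinAt_const s I (1:ℝ)).congr
      · intro u hu
        rw [real_inner_self_eq_norm_sq, hgu u hu]; norm_num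
      · rw [real_inner_self_eq_norm_sq, hgu s hsI]; norm_num
    have he : ⟪g s, g' s⟫ + ⟪g' s, g s⟫ = 0 :=
      (h1.derivWithin (hUI s hsI)).symm.trans (h2.derivWithin (hUI s hsI))
    have hc : (⟪g s, g' s⟫ : ℝ) = ⟪g' s, g s⟫ := real_inner_comm _ _
    linarith [he, hc]
  set m : ℝ := t + ε / 2 with hmdef
  have hmJ : m ∈ J := ⟨by rw [hmdef]; linarith, by rw [hmdef]; linarith⟩
  have hMε : M * ε < π := by
    rw [lt_div_iff₀ hM] at hεM; linarith [hεM]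
  have hkey : ∀ s ∈ J, Real.cos (M * (s - m)) ≤ ⟪g s, g m⟫ := by
    intro s hs
    have habs : |s - m| ≤ ε / 2 := by
      rw [abs_le]; exact ⟨by simp only [hmdef]; linarith [hs.1], by simp only [hmdef]; linarith [hs.2]⟩
    have hsm : M * |s - m| ≤ π / 2 := by
      have : M * |s - m| ≤ M * (ε / 2) := mul_le_mul_of_nonneg_left habs hM.le
      linarith
    have hck := chord_key (convex_Icc t (t+ε)) hM hgJ
      (fun u hu => hgu u (hJI hu)) (fun u hu => hg'bd u (hJI hu)) horth hmJ hs hsm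
    calc Real.cos (M * (s - m)) = Real.cos (M * |s - m|) := by
          rw [← Real.cos_abs (M * (s - m)), abs_mul, abs_of_pos hM]
      _ ≤ ⟪g s, g m⟫ := hck
  -- FTC
  have hgcontJ : ContinuousOn g (Set.uIcc t (t + ε)) := by
    rw [Set.uIcc_of_le htt]; exact hC1.continuousOn.mono hJI
  have hgint : IntervalIntegrable g MeasureTheory.volume t (t + ε) :=
    hgcontJ.intervalIntegrable
  have hFTC : (∫ s in t..(t + ε), g s) = γ (t + ε) - γ t := by
    apply intervalIntegral.integral_eq_sub_of_hasDeriv_right_of_le htt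
      ((hC2.continuousOn).mono hJI) ?_ hgint
    intro x hx
    have hxI : x ∈ I := hJI (Set.Ioo_subset_Icc_self hx)
    have : HasDerivAt γ (g x) x := by
      rw [hgeq x hxI]; exact (hdiffγ x hxI).hasDerivAt
    exact this.hasDerivWithinAt
  -- pull inner product inside the integral
  have hinner : (⟪γ (t + ε) - γ t, g m⟫ : ℝ) = ∫ s in t..(t + ε), ⟪g s, g m⟫ := by
    have h1 := (innerSL ℝ (g m)).intervalIntegral_comp_comm hgint
    rw [hFTC] at h1
    simp only [innerSL_apply_apply] at h1
    calc (⟪γ (t + ε) - γ t, g m⟫ : ℝ) = ⟪g m, γ (t + ε) - γ t⟫ := real_inner_comm _ _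
      _ = ∫ s in t..(t + ε), ⟪g m, g s⟫ := h1.symm
      _ = ∫ s in t..(t + ε), ⟪g s, g m⟫ :=
          intervalIntegral.integral_congr (fun s _ => real_inner_comm _ _)
  -- compute the cosine integral
  have hcosint : (∫ s in t..(t + ε), Real.cos (M * (s - m))) = 2 / M * Real.sin (M / 2 * ε) := by
    have h1 : (∫ s in t..(t + ε), Real.cos (M * (s - m)))
        = ∫ u in (t - m)..(t + ε - m), Real.cos (M * u) :=
      intervalIntegral.integral_comp_sub_right (fun u => Real.cos (M * u)) m
    have h2 : (∫ u in (t - m)..(t + ε - m), Real.cos (M * u))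
        = M⁻¹ • ∫ x in (M * (t - m))..(M * (t + ε - m)), Real.cos x :=
      intervalIntegral.integral_comp_mul_left Real.cos hM.ne'
    have e1 : M * (t - m) = -(M / 2 * ε) := by rw [hmdef]; ring
    have e2 : M * (t + ε - m) = M / 2 * ε := by rw [hmdef]; ring
    rw [h1, h2, e1, e2, integral_cos, Real.sin_neg, smul_eq_mul]
    field_simp
    ring
  -- comparison of integrals
  have hcos_integrable : IntervalIntegrable (fun s => Real.cos (M * (s - m)))
      MeasureTheory.volume t (t + ε) :=
    (Real.continuous_cos.comp ((continuous_const.mul (continuous_id.sub continuous_const)))).intervalIntegrable _ _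
  have hip_integrable : IntervalIntegrable (fun s => (⟪g s, g m⟫ : ℝ))
      MeasureTheory.volume t (t + ε) := by
    apply ContinuousOn.intervalIntegrable
    exact hgcontJ.inner continuousOn_const
  have hmono := intervalIntegral.integral_mono_on htt hcos_integrable hip_integrable hkey
  rw [hcosint] at hmono
  rw [← hinner] at hmono
  constructor
  · -- upper bound
    have := Convex.norm_image_sub_le_of_norm_hasDerivWithin_le hγd
      (fun s hs => (hgu s hs).le) (convex_Icc (0:ℝ) L)
      (hJI ⟨le_refl t, htt⟩) (hJI ⟨htt, le_refl (t+ε)⟩)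
    simpa [abs_of_pos hε] using this
  · -- lower bound
    have hcs : (⟪γ (t + ε) - γ t, g m⟫ : ℝ) ≤ ‖γ (t + ε) - γ t‖ := by
      have := real_inner_le_norm (γ (t + ε) - γ t) (g m)
      rwa [hgu m (hJI hmJ), mul_one] at this
    exact le_trans hmono hcs
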